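/- There exists a constant C, depending only on ρ₀, such that for all integers m ≥ 0 and all ⌊m/2⌋ + 1 ≤ j ≤ m, (m!/(j!(m−j)!)) · (m+1)^{1/2} · N_{ρ,m+1}/(N_{ρ,j+1}·H_{ρ,m−j+3,1}) ≤ C·(j+1)^{1/2}/(m−j+1). -/
import Mathlib


open MeasureTheory Real Filter

noncomputable section

namespace HypP

/-- Japanese bracket `⟨y⟩ = (1+y²)^{1/2}`. -/
def br (y : ℝ) : ℝ := Real.sqrt (1 + y ^ 2)

/-- Weighting a function of `(x,y)` by `⟨y⟩^e`. -/
def wt (e : ℝ) (g : ℝ → ℝ → ℝ) : ℝ → ℝ → ℝ := fun x y => br y ^ e * g x y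

/-- `m`-th tangential derivative `∂ₓ^m`. -/
def Dx (m : ℕ) (g : ℝ → ℝ → ℝ) : ℝ → ℝ → ℝ :=
  fun x y => iteratedDeriv m (fun x' => g x' y) x

/-- `k`-th normal derivative `∂_y^k`. -/
def Dy (k : ℕ) (g : ℝ → ℝ → ℝ) : ℝ → ℝ → ℝ :=
  fun x y => iteratedDeriv k (fun y' => g x y') y

/-- Squared `L²` norm on the half-plane `ℝ × (0,∞)`. -/
def sqL2 (g : ℝ → ℝ → ℝ) : ℝ := ∫ x : ℝ, ∫ y in Set.Ioi (0 : ℝ), (g x y) ^ 2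

/-- `L²` inner product on the half-plane. -/
def ipL2 (f g : ℝ → ℝ → ℝ) : ℝ := ∫ x : ℝ, ∫ y in Set.Ioi (0 : ℝ), f x y * g x y

/-- Squared `L²ₓL^∞_y` norm on the half-plane. -/
def sqL2xLinfy (g : ℝ → ℝ → ℝ) : ℝ :=
  ∫ x : ℝ, (sSup ((fun y => |g x y|) '' Set.Ioi (0 : ℝ))) ^ 2

/-- The weight `H_{ρ,m,k}`. -/
def Hc (ρ : ℝ) (m k : ℕ) : ℝ :=
  ρ ^ (m + k + 1) * ((m : ℝ) + (k : ℝ) + 1) ^ 9 /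
    (((m + k).factorial : ℝ) * Real.sqrt (m.factorial : ℝ))

/-- The weight `N_{ρ,m} = H_{ρ,m,0}`. -/
def Nc (ρ : ℝ) (m : ℕ) : ℝ := Hc ρ m 0

/-- The weight `L_{ρ,k} = H_{ρ,1,k}`. -/
def Lc (ρ : ℝ) (k : ℕ) : ℝ := Hc ρ 1 k

/-- Squared anisotropic Gevrey norm `‖h‖²_{G^{3/2,1}_{ρ,ℓ}}`. -/
def gevSq (ρ ℓ : ℝ) (h : ℝ → ℝ → ℝ) : ℝ :=
  (∑' m : ℕ, (Nc ρ m * Real.sqrt (sqL2 (wt (ℓ - 1) (Dx m h)))) ^ 2)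
  + ∑' m : ℕ, ∑' k : ℕ,
      (((m : ℝ) + 1) * Hc ρ (m + 1) k *
        Real.sqrt (sqL2 (wt ℓ (Dx m (Dy (k + 1) h))))) ^ 2

/-- Anisotropic Gevrey norm. -/
def gevNorm (ρ ℓ : ℝ) (h : ℝ → ℝ → ℝ) : ℝ := Real.sqrt (gevSq ρ ℓ h)

/-- Membership in the anisotropic Gevrey space `G^{3/2,1}_{ρ,ℓ}`. -/
def InGev (ρ ℓ : ℝ) (h : ℝ → ℝ → ℝ) : Prop :=
  Summable (fun m : ℕ => (Nc ρ m * Real.sqrt (sqL2 (wt (ℓ - 1) (Dx m h)))) ^ 2) ∧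
  Summable (fun p : ℕ × ℕ =>
    (((p.1 : ℝ) + 1) * Hc ρ (p.1 + 1) p.2 *
      Real.sqrt (sqL2 (wt ℓ (Dx p.1 (Dy (p.2 + 1) h))))) ^ 2)

/-- Time derivative `∂ₜ`. -/
def pt (u : ℝ → ℝ → ℝ → ℝ) : ℝ → ℝ → ℝ → ℝ := fun t x y => deriv (fun s => u s x y) t

/-- Tangential derivative `∂ₓ` (time-dependent functions). -/
def px (u : ℝ → ℝ → ℝ → ℝ) : ℝ → ℝ → ℝ → ℝ := fun t x y => deriv (fun x' => u t x' y) x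

/-- Normal derivative `∂_y` (time-dependent functions). -/
def py (u : ℝ → ℝ → ℝ → ℝ) : ℝ → ℝ → ℝ → ℝ := fun t x y => deriv (fun y' => u t x y') y

/-- The normal velocity `v(t,x,y) = -∫₀^y ∂ₓu(t,x,ỹ) dỹ`. -/
def vv (u : ℝ → ℝ → ℝ → ℝ) : ℝ → ℝ → ℝ → ℝ :=
  fun t x y => -∫ s in (0 : ℝ)..y, px u t x s

/-- The auxiliary function `φ = ∂ₜu + u∂ₓu + v∂_yu`. -/
def phi (u : ℝ → ℝ → ℝ → ℝ) : ℝ → ℝ → ℝ → ℝ :=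
  fun t x y => pt u t x y + u t x y * px u t x y + vv u t x y * py u t x y

/-- `u` solves the 2D hyperbolic Prandtl system on `[0,T]`, with the no-slip boundary
condition and decay of `u` at `y → ∞`. -/
def Solves (u : ℝ → ℝ → ℝ → ℝ) (T : ℝ) : Prop :=
  (∀ t ∈ Set.Icc (0 : ℝ) T, ∀ x : ℝ, ∀ y ∈ Set.Ioi (0 : ℝ),
      pt (pt u) t x y + pt u t x y
        + u t x y * px u t x y + vv u t x y * py u t x y
        + pt (fun t' x' y' => u t' x' y' * px u t' x' y' + vv u t' x' y' * py u t' x' y') t x y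
        - py (py u) t x y = 0)
  ∧ (∀ t ∈ Set.Icc (0 : ℝ) T, ∀ x : ℝ, u t x 0 = 0)
  ∧ (∀ t ∈ Set.Icc (0 : ℝ) T, ∀ x : ℝ, Tendsto (fun y => u t x y) atTop (nhds 0))

/-- `U` is the auxiliary function `𝒰` solving
`(∂ₜ + u∂ₓ + v∂_y)∫₀^y 𝒰 dỹ = -∂ₓv`, `𝒰|_{t=0} = 0`. -/
def AuxU (u U : ℝ → ℝ → ℝ → ℝ) (T : ℝ) : Prop :=
  (∀ t ∈ Set.Icc (0 : ℝ) T, ∀ x : ℝ, ∀ y ∈ Set.Ioi (0 : ℝ),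
      pt (fun t' x' y' => ∫ s in (0 : ℝ)..y', U t' x' s) t x y
        + u t x y * px (fun t' x' y' => ∫ s in (0 : ℝ)..y', U t' x' s) t x y
        + vv u t x y * py (fun t' x' y' => ∫ s in (0 : ℝ)..y', U t' x' s) t x y
        = -px (vv u) t x y)
  ∧ (∀ x : ℝ, ∀ y : ℝ, U 0 x y = 0)

/-- The auxiliary function `λ = ∂ₓu - (∂_yu)∫₀^y 𝒰 dỹ`. -/
def lam (u U : ℝ → ℝ → ℝ → ℝ) : ℝ → ℝ → ℝ → ℝ :=
  fun t x y => px u t x y - py u t x y * ∫ s in (0 : ℝ)..y, U t x s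

/-- `|a|²_{X_ρ}` for a time slice `a = (us, Us, ls, fs)` of `(u, 𝒰, λ, φ)`. -/
def Xsq (ρ ℓ : ℝ) (us Us ls fs : ℝ → ℝ → ℝ) : ℝ :=
  (∑' m : ℕ, (Nc ρ (m + 1)) ^ 2 * sqL2 (Dx m Us))
  + (∑' m : ℕ, ((m : ℝ) + 1) * (Nc ρ (m + 1)) ^ 2 * sqL2 (wt (ℓ - 1) (Dx m ls)))
  + ∑' m : ℕ, ∑' k : ℕ, ((m : ℝ) + 1) ^ 2 * (Hc ρ (m + 1) k) ^ 2 *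
      (sqL2 (wt ℓ (Dx m (Dy k fs))) + sqL2 (wt ℓ (Dx m (Dy (k + 1) us))))

/-- `|a|²_{Y_ρ}` for a time slice `a = (us, Us, ls, fs)` of `(u, 𝒰, λ, φ)`. -/
def Ysq (ρ ℓ : ℝ) (us Us ls fs : ℝ → ℝ → ℝ) : ℝ :=
  (∑' m : ℕ, ((m : ℝ) + 1) * (Nc ρ (m + 1)) ^ 2 * sqL2 (Dx m Us))
  + (∑' m : ℕ, ((m : ℝ) + 1) ^ 2 * (Nc ρ (m + 1)) ^ 2 * sqL2 (wt (ℓ - 1) (Dx m ls)))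
  + ∑' m : ℕ, ∑' k : ℕ, ((m : ℝ) + (k : ℝ) + 1) * ((m : ℝ) + 1) ^ 2 * (Hc ρ (m + 1) k) ^ 2 *
      (sqL2 (wt ℓ (Dx m (Dy k fs))) + sqL2 (wt ℓ (Dx m (Dy (k + 1) us))))

/-- `|a|_{X_ρ}`. -/
def Xnorm (ρ ℓ : ℝ) (us Us ls fs : ℝ → ℝ → ℝ) : ℝ := Real.sqrt (Xsq ρ ℓ us Us ls fs)

/-- `|a|_{Y_ρ}`. -/
def Ynorm (ρ ℓ : ℝ) (us Us ls fs : ℝ → ℝ → ℝ) : ℝ := Real.sqrt (Ysq ρ ℓ us Us ls fs)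

end HypP

open HypP

/-- estimate (4.19): for `⌊m/2⌋ + 1 ≤ j ≤ m`,
`(m!/(j!(m−j)!)) (m+1)^{1/2} N_{ρ,m+1}/(N_{ρ,j+1}H_{ρ,m−j+3,1}) ≤ C(j+1)^{1/2}/(m−j+1)`. -/
private lemma weight_key_aux (ρ X Y Z sa sb sc sm a b c : ℝ) (j q : ℕ)
    (hρ : ρ ≠ 0) (ha : a ≠ 0) (hb : b ≠ 0) (hc : c ≠ 0)
    (hsa : sa ≠ 0) (hsb : sb ≠ 0) (hsc : sc ≠ 0)
    (hY : Y ≠ 0) (hZ : Z ≠ 0)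
    (h1 : ((j:ℝ)+1) ≠ 0) (h2 : ((j:ℝ)+(q:ℝ)+1) ≠ 0)
    (h3 : ((q:ℝ)+1) ≠ 0) (h4 : ((q:ℝ)+2) ≠ 0) (h5 : ((q:ℝ)+3) ≠ 0) (h6 : ((q:ℝ)+4) ≠ 0) :
    c / (a * b) * sm *
      (ρ ^ (j + q + 1 + 1) * X ^ 9 / ((((j:ℝ)+(q:ℝ)+1) * c) * sc) /
        (ρ ^ (j + 1 + 1) * Y ^ 9 / ((((j:ℝ)+1) * a) * sa) *
          (ρ ^ (q + 3 + 1 + 1) * Z ^ 9 / ((((q:ℝ)+4)*((q:ℝ)+3)*((q:ℝ)+2)*((q:ℝ)+1) * b) * sb))))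
    = (((j:ℝ)+1)*((q:ℝ)+1)*((q:ℝ)+2)*((q:ℝ)+3)*((q:ℝ)+4)/((j:ℝ)+(q:ℝ)+1))
      * (sa * sb / sc) * sm * (X^9/(Y^9*Z^9)) * (1/ρ)^5 := by
  field_simp
  ring

private lemma weight_frac_le (a b c d e f : ℝ) (hb : 0 < b) (hd : 0 < d) (hf : 0 < f)
    (h : a * c * f ≤ e * (b * d)) : a / b * (c / d) ≤ e / f := by
  rw [div_mul_div_comm, div_le_div_iff₀ (by positivity) hf]
  exact h

set_option maxHeartbeats 2000000 in
theorem weight_estimate_fe5 (ρ₀ : ℝ) (hρ₀ : 0 < ρ₀) :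
    ∃ C : ℝ, 0 < C ∧
      ∀ ρ : ℝ, (Real.exp 1)⁻¹ * ρ₀ ≤ ρ → ρ ≤ ρ₀ →
        ∀ m j : ℕ, m / 2 + 1 ≤ j → j ≤ m →
          (m.factorial : ℝ) / ((j.factorial : ℝ) * ((m - j).factorial : ℝ))
              * Real.sqrt ((m : ℝ) + 1)
              * (Nc ρ (m + 1) / (Nc ρ (j + 1) * Hc ρ (m - j + 3) 1))
            ≤ C * Real.sqrt ((j : ℝ) + 1) / ((m : ℝ) - (j : ℝ) + 1) := by
  refine ⟨512 * (Real.exp 1 / ρ₀) ^ 5, by positivity, ?_⟩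
  intro ρ hρl hρu m j hj1 hjm
  have hρ : 0 < ρ := lt_of_lt_of_le (by positivity) hρl
  obtain ⟨q, rfl⟩ : ∃ q, m = j + q := ⟨m - j, by omega⟩
  have hsub : j + q - j = q := by omega
  rw [hsub]
  have hqj : q + 1 ≤ j := by omega
  have hQJ : (q : ℝ) + 1 ≤ (j : ℝ) := by exact_mod_cast hqj
  have hJ0 : (0:ℝ) ≤ (j:ℝ) := Nat.cast_nonneg j
  have hQ0 : (0:ℝ) ≤ (q:ℝ) := Nat.cast_nonneg q
  simp only [Nc, Hc, Nat.add_zero, Nat.cast_zero, add_zero]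
  push_cast
  set sa := Real.sqrt (((j+1).factorial : ℝ)) with hsa
  set sb := Real.sqrt (((q+3).factorial : ℝ)) with hsb
  set sc := Real.sqrt (((j+q+1).factorial : ℝ)) with hsc
  have fa : (0:ℝ) < (j.factorial : ℝ) := by exact_mod_cast j.factorial_pos
  have fb : (0:ℝ) < (q.factorial : ℝ) := by exact_mod_cast q.factorial_pos
  have fc : (0:ℝ) < ((j+q).factorial : ℝ) := by exact_mod_cast (j+q).factorial_pos
  have fa1 : (0:ℝ) < ((j+1).factorial : ℝ) := by exact_mod_cast (j+1).factorial_pos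
  have fb3 : (0:ℝ) < ((q+3).factorial : ℝ) := by exact_mod_cast (q+3).factorial_pos
  have fc1 : (0:ℝ) < ((j+q+1).factorial : ℝ) := by exact_mod_cast (j+q+1).factorial_pos
  have sa0 : 0 < sa := Real.sqrt_pos.2 fa1
  have sb0 : 0 < sb := Real.sqrt_pos.2 fb3
  have sc0 : 0 < sc := Real.sqrt_pos.2 fc1
  have ra1 : ((j+1).factorial : ℝ) = ((j:ℝ)+1) * (j.factorial:ℝ) := by
    rw [Nat.factorial_succ]; push_cast; ring
  have rc1 : ((j+q+1).factorial : ℝ) = ((j:ℝ)+(q:ℝ)+1) * ((j+q).factorial:ℝ) := by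
    rw [Nat.factorial_succ]; push_cast; ring
  have rb3 : ((q+3).factorial : ℝ)
      = ((q:ℝ)+3)*((q:ℝ)+2)*((q:ℝ)+1) * (q.factorial:ℝ) := by
    rw [show q+3 = q+2+1 by omega, Nat.factorial_succ,
        show q+2 = q+1+1 by omega, Nat.factorial_succ, Nat.factorial_succ]
    push_cast; ring
  have rb4 : ((q+3+1).factorial : ℝ)
      = ((q:ℝ)+4)*((q:ℝ)+3)*((q:ℝ)+2)*((q:ℝ)+1) * (q.factorial:ℝ) := by
    rw [Nat.factorial_succ]; push_cast; rw [rb3]; ring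
  rw [ra1, rc1, rb4,
      show ((j:ℝ)+(q:ℝ)+1+1) = ((j:ℝ)+(q:ℝ)+2) by ring,
      show ((j:ℝ)+1+1) = ((j:ℝ)+2) by ring,
      show ((q:ℝ)+3+1+1) = ((q:ℝ)+5) by ring,
      show ((j:ℝ) + (q:ℝ) - (j:ℝ) + 1) = (q:ℝ)+1 by ring]
  rw [weight_key_aux ρ ((j:ℝ)+(q:ℝ)+2) ((j:ℝ)+2) ((q:ℝ)+5) sa sb sc
        (Real.sqrt ((j:ℝ)+(q:ℝ)+1)) (j.factorial:ℝ) (q.factorial:ℝ) ((j+q).factorial:ℝ)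
        j q hρ.ne' fa.ne' fb.ne' fc.ne' sa0.ne' sb0.ne' sc0.ne'
        (by positivity) (by positivity) (by positivity) (by positivity)
        (by positivity) (by positivity) (by positivity) (by positivity)]
  -- bound the sqrt factorial ratio
  have hdvd : ((j+1).factorial * q.factorial : ℕ) ≤ (j+q+1).factorial := by
    have h := Nat.factorial_mul_factorial_dvd_factorial_add (j+1) q
    rw [show j+1+q = j+q+1 by omega] at h
    exact Nat.le_of_dvd (j+q+1).factorial_pos h
  have hdle : ((j+1).factorial : ℝ) * (q.factorial:ℝ) ≤ ((j+q+1).factorial : ℝ) := by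
    exact_mod_cast hdvd
  have hsab : sa * sb / sc ≤ Real.sqrt (((q:ℝ)+1)*((q:ℝ)+2)*((q:ℝ)+3)) := by
    rw [hsa, hsb, hsc, ← Real.sqrt_mul fa1.le, ← Real.sqrt_div (by positivity)]
    apply Real.sqrt_le_sqrt
    rw [div_le_iff₀ fc1, rb3]
    calc ((j+1).factorial : ℝ) * (((q:ℝ)+3)*((q:ℝ)+2)*((q:ℝ)+1) * (q.factorial:ℝ))
        = (((q:ℝ)+1)*((q:ℝ)+2)*((q:ℝ)+3)) * (((j+1).factorial : ℝ) * (q.factorial:ℝ)) := by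
          ring
      _ ≤ (((q:ℝ)+1)*((q:ℝ)+2)*((q:ℝ)+3)) * ((j+q+1).factorial : ℝ) := by
          gcongr
  have hE : 1/ρ ≤ Real.exp 1 / ρ₀ := by
    have h1 : (0:ℝ) < (Real.exp 1)⁻¹ * ρ₀ := by positivity
    calc 1/ρ ≤ 1/((Real.exp 1)⁻¹ * ρ₀) := by
          apply one_div_le_one_div_of_le h1 hρl
      _ = Real.exp 1 / ρ₀ := by
          rw [one_div, mul_inv, inv_inv]; ring
  have step2 : (((j:ℝ)+1)*((q:ℝ)+1)*((q:ℝ)+2)*((q:ℝ)+3)*((q:ℝ)+4)/((j:ℝ)+(q:ℝ)+1))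
        * (sa * sb / sc) * Real.sqrt ((j:ℝ)+(q:ℝ)+1)
        * (((j:ℝ)+(q:ℝ)+2)^9/(((j:ℝ)+2)^9*((q:ℝ)+5)^9)) * (1/ρ)^5
      ≤ (((j:ℝ)+1)*((q:ℝ)+1)*((q:ℝ)+2)*((q:ℝ)+3)*((q:ℝ)+4)/((j:ℝ)+(q:ℝ)+1))
        * Real.sqrt (((q:ℝ)+1)*((q:ℝ)+2)*((q:ℝ)+3)) * Real.sqrt ((j:ℝ)+(q:ℝ)+1)
        * ((2*((j:ℝ)+2))^9/(((j:ℝ)+2)^9*((q:ℝ)+5)^9)) * (Real.exp 1 / ρ₀)^5 := by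
    gcongr _ * ?_ * _ * (?_ ^ 9 / _) * ?_ ^ 5 <;>
      first
        | positivity
        | exact hsab
        | exact hE
        | linarith
  refine le_trans step2 ?_
  have hD2 : (2*((j:ℝ)+2))^9/(((j:ℝ)+2)^9*((q:ℝ)+5)^9) = 512/((q:ℝ)+5)^9 := by
    have h7 : ((j:ℝ)+2) ≠ 0 := by positivity
    have h8 : ((q:ℝ)+5) ≠ 0 := by positivity
    rw [mul_pow]
    field_simp
    ring
  rw [hD2]
  -- core inequality
  set u := Real.sqrt ((j:ℝ)+(q:ℝ)+1) with hu
  set v := Real.sqrt ((j:ℝ)+1) with hv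
  set w := Real.sqrt (((q:ℝ)+1)*((q:ℝ)+2)*((q:ℝ)+3)) with hw
  have hu0 : 0 < u := Real.sqrt_pos.2 (by positivity)
  have hv0 : 0 < v := Real.sqrt_pos.2 (by positivity)
  have hw0 : 0 ≤ w := Real.sqrt_nonneg _
  have hu2 : u^2 = (j:ℝ)+(q:ℝ)+1 := Real.sq_sqrt (by positivity)
  have hv2 : v^2 = (j:ℝ)+1 := Real.sq_sqrt (by positivity)
  have hvu : v ≤ u := Real.sqrt_le_sqrt (by linarith)
  have hw2 : w ≤ ((q:ℝ)+5)^2 := by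
    rw [hw]
    calc Real.sqrt (((q:ℝ)+1)*((q:ℝ)+2)*((q:ℝ)+3))
        ≤ Real.sqrt ((((q:ℝ)+5)^2)^2) := Real.sqrt_le_sqrt (by nlinarith)
      _ = ((q:ℝ)+5)^2 := Real.sqrt_sq (by positivity)
  have hcore : (((j:ℝ)+1)*((q:ℝ)+1)*((q:ℝ)+2)*((q:ℝ)+3)*((q:ℝ)+4)/((j:ℝ)+(q:ℝ)+1))
        * w * u * (512/((q:ℝ)+5)^9) ≤ 512 * v / ((q:ℝ)+1) := by
    have heq : (((j:ℝ)+1)*((q:ℝ)+1)*((q:ℝ)+2)*((q:ℝ)+3)*((q:ℝ)+4)/((j:ℝ)+(q:ℝ)+1))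
          * w * u * (512/((q:ℝ)+5)^9)
        = (((j:ℝ)+1)*((q:ℝ)+1)*((q:ℝ)+2)*((q:ℝ)+3)*((q:ℝ)+4)*w*u)/((j:ℝ)+(q:ℝ)+1)
          * (512/((q:ℝ)+5)^9) := by
      ring
    rw [heq]
    apply weight_frac_le _ _ _ _ _ _ (by positivity) (by positivity) (by positivity)
    rw [← hv2, ← hu2]
    have h1' : v^2*u ≤ v*u^2 := by
      nlinarith [mul_le_mul_of_nonneg_left hvu (mul_nonneg hv0.le hu0.le)]
    have poly : ((q:ℝ)+1)^2*((q:ℝ)+2)*((q:ℝ)+3)*((q:ℝ)+4)*((q:ℝ)+5)^2 ≤ ((q:ℝ)+5)^9 := by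
      calc ((q:ℝ)+1)^2*((q:ℝ)+2)*((q:ℝ)+3)*((q:ℝ)+4)*((q:ℝ)+5)^2
          ≤ ((q:ℝ)+5)^2*((q:ℝ)+5)*((q:ℝ)+5)*((q:ℝ)+5)*((q:ℝ)+5)^2 := by
            gcongr <;> linarith
        _ = ((q:ℝ)+5)^7 := by ring
        _ ≤ ((q:ℝ)+5)^9 := by
            apply pow_le_pow_right₀ (by linarith) (by norm_num)
    calc v^2*((q:ℝ)+1)*((q:ℝ)+2)*((q:ℝ)+3)*((q:ℝ)+4)*w*u*512*((q:ℝ)+1)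
        = (v^2*u) * (512*(((q:ℝ)+1)^2*((q:ℝ)+2)*((q:ℝ)+3)*((q:ℝ)+4)*w)) := by ring
      _ ≤ (v*u^2) * (512*(((q:ℝ)+1)^2*((q:ℝ)+2)*((q:ℝ)+3)*((q:ℝ)+4)*(((q:ℝ)+5)^2))) := by
          apply mul_le_mul h1' _ (by positivity) (by positivity)
          gcongr
      _ ≤ (v*u^2) * (512*(((q:ℝ)+5)^9)) := by
          apply mul_le_mul_of_nonneg_left _ (by positivity)
          have := mul_le_mul_of_nonneg_left poly (show (0:ℝ) ≤ 512 by norm_num)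
          linarith
      _ = 512*v*(u^2*((q:ℝ)+5)^9) := by ring
  calc (((j:ℝ)+1)*((q:ℝ)+1)*((q:ℝ)+2)*((q:ℝ)+3)*((q:ℝ)+4)/((j:ℝ)+(q:ℝ)+1))
        * w * u * (512/((q:ℝ)+5)^9) * (Real.exp 1 / ρ₀)^5
      ≤ (512 * v / ((q:ℝ)+1)) * (Real.exp 1 / ρ₀)^5 := by
        apply mul_le_mul_of_nonneg_right hcore (by positivity)
    _ = 512 * (Real.exp 1 / ρ₀)^5 * v / ((q:ℝ)+1) := by ring
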